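/- For the Hahn recurrence coefficients b_n(α,β) = A_n + C_n and u_n(α,β) = A_{n-1}C_n (with A_n, C_n as in the standard Hahn formulas with truncation parameter N), the parameter substitution α̃ = -N-1-β, β̃ = -N-1-α realizes the mirror transform: b_n(α̃,β̃) = b_{N-n}(α,β) and u_n(α̃,β̃) = u_{N+1-n}(α,β). -/

import Mathlib

theorem stmt11 (N : ℕ) (α β : ℝ)
    (hden : ∀ m : ℤ, (m : ℝ) + α + β ≠ 0)
    (A C b u : ℝ → ℝ → ℝ → ℝ)
    (hA : ∀ a c t : ℝ, A a c t = (t + a + c + 1) * (t + a + 1) * ((N : ℝ) - t) /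
        ((2 * t + a + c + 1) * (2 * t + a + c + 2)))
    (hC : ∀ a c t : ℝ, C a c t = t * (t + a + c + (N : ℝ) + 1) * (t + c) /
        ((2 * t + a + c + 1) * (2 * t + a + c)))
    (hb : ∀ a c t : ℝ, b a c t = A a c t + C a c t)
    (hu : ∀ a c t : ℝ, u a c t = A a c (t - 1) * C a c t)
    (α' β' : ℝ) (hα' : α' = -(N : ℝ) - 1 - β) (hβ' : β' = -(N : ℝ) - 1 - α) :
    ∀ n : ℕ, n ≤ N →
      b α' β' (n : ℝ) = b α β ((N : ℝ) - n) ∧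
      u α' β' (n : ℝ) = u α β ((N : ℝ) + 1 - n) := by
  intro n hn
  subst hα' hβ'
  have k1 : (2*(N:ℝ)+1-2*n) + α + β ≠ 0 := by
    have := hden (2*N+1-2*n); intro h; apply this; push_cast; linarith
  have k2 : (2*(N:ℝ)-2*n) + α + β ≠ 0 := by
    have := hden (2*N-2*n); intro h; apply this; push_cast; linarith
  have k3 : (2*(N:ℝ)+2-2*n) + α + β ≠ 0 := by
    have := hden (2*N+2-2*n); intro h; apply this; push_cast; linarith
  have k4 : (2*(N:ℝ)+3-2*n) + α + β ≠ 0 := by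
    have := hden (2*N+3-2*n); intro h; apply this; push_cast; linarith
  simp only [hb, hu, hA, hC]
  constructor
  · have e1 : 2*(n:ℝ) + (-(N:ℝ)-1-β) + (-(N:ℝ)-1-α) + 1 ≠ 0 := by intro h; apply k1; linarith
    have e2 : 2*(n:ℝ) + (-(N:ℝ)-1-β) + (-(N:ℝ)-1-α) + 2 ≠ 0 := by intro h; apply k2; linarith
    have e3 : 2*(n:ℝ) + (-(N:ℝ)-1-β) + (-(N:ℝ)-1-α) ≠ 0 := by intro h; apply k3; linarith
    have f1 : 2*((N:ℝ)-n) + α + β + 1 ≠ 0 := by intro h; apply k1; linarith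
    have f2 : 2*((N:ℝ)-n) + α + β + 2 ≠ 0 := by intro h; apply k3; linarith
    have f3 : 2*((N:ℝ)-n) + α + β ≠ 0 := by intro h; apply k2; linarith
    rw [div_add_div _ _ (mul_ne_zero e1 e2) (mul_ne_zero e1 e3),
      div_add_div _ _ (mul_ne_zero f1 f2) (mul_ne_zero f1 f3),
      div_eq_div_iff (mul_ne_zero (mul_ne_zero e1 e2) (mul_ne_zero e1 e3))
        (mul_ne_zero (mul_ne_zero f1 f2) (mul_ne_zero f1 f3))]
    ring
  · field_simp
    ring
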